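/- Let σ ∈ ℕ∪{0}, let θ ∈ ℕ⁺, let G be a graph and let X ⊆ V(G) such that there is no (σ,θ)-X-abyss in G. Then G[X] admits a 2^σ-vertex-coloring of G-diameter less than θ. -/

import Mathlib

/-- The induced subgraph of `G` on `S` is nonempty and connected, expressed via
walks of `G` staying inside `S`. -/
def ConnectedIn {V : Type*} (G : SimpleGraph V) (S : Set V) : Prop :=
  S.Nonempty ∧ ∀ a ∈ S, ∀ b ∈ S, ∃ w : G.Walk a b, ∀ v ∈ w.support, v ∈ S

/-- An induced `H`-model in `G`: pairwise disjoint nonempty connected branch sets,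
joined by an edge iff the corresponding vertices of `H` are adjacent. -/
def IsInducedModel {W V : Type*} (H : SimpleGraph W) (G : SimpleGraph V) (X : W → Set V) : Prop :=
  (∀ w, ConnectedIn G (X w)) ∧
  (∀ w w', w ≠ w' → Disjoint (X w) (X w')) ∧
  (∀ w w', H.Adj w w' → ∃ a ∈ X w, ∃ b ∈ X w', G.Adj a b) ∧
  (∀ w w', w ≠ w' → ¬ H.Adj w w' → ∀ a ∈ X w, ∀ b ∈ X w', ¬ G.Adj a b)

/-- `G` has an induced minor isomorphic to `H`. -/
def InducedMinor {W V : Type*} (H : SimpleGraph W) (G : SimpleGraph V) : Prop :=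
  ∃ X : W → Set V, IsInducedModel H G X

/-- An `H`-model in `G` (for the minor relation). -/
def IsMinorModel {W V : Type*} (H : SimpleGraph W) (G : SimpleGraph V) (X : W → Set V) : Prop :=
  (∀ w, ConnectedIn G (X w)) ∧
  (∀ w w', w ≠ w' → Disjoint (X w) (X w')) ∧
  (∀ w w', H.Adj w w' → ∃ a ∈ X w, ∃ b ∈ X w', G.Adj a b)

/-- `G` has a minor isomorphic to `H`. -/
def HasMinor {W V : Type*} (H : SimpleGraph W) (G : SimpleGraph V) : Prop :=
  ∃ X : W → Set V, IsMinorModel H G X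

/-- `(T, β)` is a tree decomposition of `G`. -/
structure IsTreeDecomp {V ι : Type*} (G : SimpleGraph V) (T : SimpleGraph ι)
    (β : ι → Finset V) : Prop where
  tree : T.IsTree
  bags_connected : ∀ v : V, ConnectedIn T {i | v ∈ β i}
  edges_covered : ∀ u v : V, G.Adj u v → ∃ i, u ∈ β i ∧ v ∈ β i

/-- `G` has a tree decomposition of width at most `w`. -/
def TreewidthLE {V : Type*} (G : SimpleGraph V) (w : ℕ) : Prop :=
  ∃ (n : ℕ) (T : SimpleGraph (Fin n)) (β : Fin n → Finset V),
    IsTreeDecomp G T β ∧ ∀ i, (β i).card ≤ w + 1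

noncomputable def treewidth {V : Type*} (G : SimpleGraph V) : ℕ :=
  sInf {w | TreewidthLE G w}

/-- `G` has a path decomposition of width at most `w`. -/
def PathwidthLE {V : Type*} (G : SimpleGraph V) (w : ℕ) : Prop :=
  ∃ (n : ℕ) (β : Fin n → Finset V),
    IsTreeDecomp G (SimpleGraph.pathGraph n) β ∧ ∀ i, (β i).card ≤ w + 1

noncomputable def pathwidth {V : Type*} (G : SimpleGraph V) : ℕ :=
  sInf {w | PathwidthLE G w}

/-- A hereditary class of finite graphs (each finite graph is represented, up to
isomorphism, on some `Fin n`): the class is closed under induced subgraphs,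
i.e. under pulling back along injections. -/
def Hereditary (𝒢 : ∀ n : ℕ, SimpleGraph (Fin n) → Prop) : Prop :=
  ∀ (n m : ℕ) (G : SimpleGraph (Fin n)) (f : Fin m ↪ Fin n),
    𝒢 n G → 𝒢 m (G.comap ⇑f)

/-- A graph `J` is `ζ`-jagged if every induced subgraph with pathwidth at least 3
has at least `ζ` vertices of degree two (in that induced subgraph). -/
def Jagged {V : Type*} (ζ : ℕ) (J : SimpleGraph V) : Prop :=
  ∀ s : Set V, 3 ≤ pathwidth (J.induce s) →
    ζ ≤ {v | v ∈ s ∧ ({w | w ∈ s ∧ J.Adj v w}).ncard = 2}.ncard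

/-- A graph is `d`-degenerate if every nonempty induced subgraph has a vertex of
degree at most `d`. -/
def Degenerate {V : Type*} (d : ℕ) (G : SimpleGraph V) : Prop :=
  ∀ s : Set V, s.Nonempty → ∃ v ∈ s, ({w | w ∈ s ∧ G.Adj v w}).ncard ≤ d

/-- The complete binary tree of radius `ρ`: vertices are binary strings of length
at most `ρ`, and `x` is adjacent to `b :: x` (its children). -/
def binTree (ρ : ℕ) : SimpleGraph {l : List Bool // l.length ≤ ρ} where
  Adj x y := (∃ b : Bool, (x : List Bool) = b :: (y : List Bool)) ∨
             (∃ b : Bool, (y : List Bool) = b :: (x : List Bool))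
  symm := by constructor; rintro x y (h | h); exact Or.inr h; exact Or.inl h
  loopless := by
    constructor
    rintro x (⟨b, hb⟩ | ⟨b, hb⟩) <;>
      · have := congrArg List.length hb
        simp at this

/-- The `n × n` square grid graph. -/
def gridGraph (n : ℕ) : SimpleGraph (Fin n × Fin n) where
  Adj p q := (p.1 = q.1 ∧ ((p.2 : ℕ) + 1 = (q.2 : ℕ) ∨ (q.2 : ℕ) + 1 = (p.2 : ℕ))) ∨
             (p.2 = q.2 ∧ ((p.1 : ℕ) + 1 = (q.1 : ℕ) ∨ (q.1 : ℕ) + 1 = (p.1 : ℕ)))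
  symm := by
    constructor
    rintro p q (⟨h1, h2⟩ | ⟨h1, h2⟩)
    · exact Or.inl ⟨h1.symm, h2.symm⟩
    · exact Or.inr ⟨h1.symm, h2.symm⟩
  loopless := by constructor; rintro p (⟨_, h | h⟩ | ⟨_, h | h⟩) <;> omega

/-- A graph is planar iff it is isomorphic to a minor of some square grid. -/
def IsPlanar {W : Type*} (H : SimpleGraph W) : Prop :=
  ∃ n : ℕ, HasMinor H (gridGraph n)

/-- `S` is the vertex set of an induced path in `G` from `x` to `y`. -/
def IsInducedPathSet {V : Type*} (G : SimpleGraph V) (S : Set V) (x y : V) : Prop :=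
  ∃ p : G.Walk x y, p.IsPath ∧ {v | v ∈ p.support} = S ∧
    ∀ u v : V, u ∈ p.support → v ∈ p.support → G.Adj u v → p.toSubgraph.Adj u v

/-- `G` has a stable strong `(κ, lam)`-block: a stable set `B` of at least `κ`
vertices together with, for each unordered pair of distinct vertices of `B`,
at least `lam` pairwise internally disjoint induced paths joining them, such that
path systems of distinct pairs meet exactly in the shared endpoints. -/
def HasStableStrongBlock {V : Type*} (G : SimpleGraph V) (κ lam : ℕ) : Prop :=
  ∃ (B : Set V) (P : V → V → Fin lam → Set V),
    κ ≤ B.ncard ∧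
    (∀ x ∈ B, ∀ y ∈ B, x ≠ y → ¬ G.Adj x y) ∧
    (∀ x ∈ B, ∀ y ∈ B, x ≠ y →
      (∀ i, IsInducedPathSet G (P x y i) x y) ∧
      (∀ i j, i ≠ j → ∀ v, v ∈ P x y i → v ∈ P x y j → v = x ∨ v = y) ∧
      (∀ i, P x y i = P y x i)) ∧
    (∀ x ∈ B, ∀ y ∈ B, ∀ x' ∈ B, ∀ y' ∈ B, x ≠ y → x' ≠ y' →
      ({x, y} : Set V) ≠ {x', y'} →
      (⋃ i, P x y i) ∩ (⋃ i, P x' y' i) = (({x, y} : Set V) ∩ {x', y'}))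

/-- `G` is `(κ, lam)`-separable: there is no stable strong `(κ, lam)`-block in `G`. -/
def Separable {V : Type*} (G : SimpleGraph V) (κ lam : ℕ) : Prop :=
  ¬ HasStableStrongBlock G κ lam

/-- In the tree `T` rooted at `u`, `w` is a child of `v`. -/
def IsChild {α : Type*} (T : SimpleGraph α) (u v w : α) : Prop :=
  T.Adj v w ∧ T.dist u w = T.dist u v + 1

/-- `(T, u)` is a `(δ, ρ)`-regular rooted tree: `T` is a tree, every vertex is at
distance at most `ρ` from `u`, and every vertex at distance less than `ρ` from `u`
has exactly `δ` children. -/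
def RootedRegular {α : Type*} (T : SimpleGraph α) (u : α) (δ ρ : ℕ) : Prop :=
  T.IsTree ∧ (∀ v, T.dist u v ≤ ρ) ∧
    ∀ v, T.dist u v < ρ → {w | IsChild T u v w}.ncard = δ

/-- The rooted tree induced by `T` on `s`, with root `r`, is a rooted subtree of
`(T, u)`: it is a tree and every child relation in it is a child relation in `(T, u)`. -/
def IsRootedSubtree {α : Type*} (T : SimpleGraph α) (u : α) (s : Set α) (r : ↥s) : Prop :=
  (T.induce s).IsTree ∧
    ∀ v w : ↥s, IsChild (T.induce s) r v w → IsChild T u (↑v) (↑w)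

open Classical in
/-- The `i`-ancestor of `v` in the tree `T` rooted at `u`: the vertex on the unique
`u`–`v` path at distance `i` from `v`. -/
noncomputable def ancestor {α : Type*} (T : SimpleGraph α) (u v : α) (i : ℕ) : α :=
  if h : ∃ w, T.dist u w + i = T.dist u v ∧ T.dist w v = i then h.choose else v

/-- The rooted tree `T` (mapped into `G` by `f`) is path-uniform in `G`. -/
def PathUniform {V β : Type*} (G : SimpleGraph V) (f : β → V) (T : SimpleGraph β)
    (r : β) (ρ : ℕ) : Prop :=
  ∀ v v' : β, T.dist r v = ρ → T.dist r v' = ρ → ∀ i j : ℕ, i ≤ ρ → j ≤ ρ →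
    (G.Adj (f (ancestor T r v i)) (f (ancestor T r v j)) ↔
      G.Adj (f (ancestor T r v' i)) (f (ancestor T r v' j)))

/-- The rooted tree `T` (mapped into `G` by `f`) is path-induced in `G`. -/
def PathInduced {V β : Type*} (G : SimpleGraph V) (f : β → V) (T : SimpleGraph β)
    (r : β) (ρ : ℕ) : Prop :=
  ∀ v : β, T.dist r v = ρ → ∀ i j : ℕ, i ≤ ρ → j ≤ ρ →
    (G.Adj (f (ancestor T r v i)) (f (ancestor T r v j)) ↔ (i + 1 = j ∨ j + 1 = i))

/-- The rooted tree `T` (mapped into `G` by `f`) is branch-induced in `G`: every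
`G`-edge between vertices of `T` that is not a `T`-edge joins a vertex to one of
its ancestors. -/
def BranchInduced {V β : Type*} (G : SimpleGraph V) (f : β → V) (T : SimpleGraph β)
    (r : β) : Prop :=
  ∀ v w : β, G.Adj (f v) (f w) → ¬ T.Adj v w →
    (T.dist r v + T.dist v w = T.dist r w ∨ T.dist r w + T.dist w v = T.dist r v)

/-- `G` has a (not necessarily induced) subgraph isomorphic to `H`. -/
def HasSubgraphIso {W V : Type*} (H : SimpleGraph W) (G : SimpleGraph V) : Prop :=
  ∃ f : W → V, Function.Injective f ∧ ∀ a b, H.Adj a b → G.Adj (f a) (f b)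

/-- The spanning subgraph of `G` consisting of the edges of color `i` under the
edge-coloring `F`. -/
def colorSub {V : Type*} {c : ℕ} (G : SimpleGraph V) (F : V → V → Fin c) (i : Fin c) :
    SimpleGraph V where
  Adj u v := G.Adj u v ∧ F u v = i ∧ F v u = i
  symm := by constructor; rintro u v ⟨h1, h2, h3⟩; exact ⟨h1.symm, h3, h2⟩
  loopless := by constructor; rintro u ⟨h, _, _⟩; exact G.irrefl h

/-- Distance from `a` to `b` within the induced subgraph `G[S]` (via walks of `G`
all of whose vertices lie in `S`). -/
noncomputable def distIn {V : Type*} (G : SimpleGraph V) (S : Set V) (a b : V) : ℕ :=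
  sInf {n | ∃ w : G.Walk a b, w.length = n ∧ ∀ v ∈ w.support, v ∈ S}

/-- `(a 0, …, a (σ+1))` is a `(σ, θ)`-`X`-abyss in `G`. -/
def IsAbyss {V : Type*} (G : SimpleGraph V) (X : Set V) (σ θ : ℕ) (a : ℕ → V) : Prop :=
  ∃ (S : ℕ → Set V) (ρ : ℕ → ℕ),
    S 0 ⊆ X ∧ ConnectedIn G (S 0) ∧ (∀ k ≤ σ + 1, a k ∈ S 0) ∧
    (∀ i < σ,
      S (i + 1) ⊆ {v | v ∈ S i ∧ distIn G (S i) (a i) v = ρ i + 1} ∧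
      ConnectedIn G (S (i + 1)) ∧
      ∀ k, i + 1 ≤ k → k ≤ σ + 1 → a k ∈ S (i + 1)) ∧
    θ ≤ G.dist (a σ) (a (σ + 1))

/-- The torso of a tree decomposition `(T, β)` of `G` at the node `x`. -/
def torso {V ι : Type*} (G : SimpleGraph V) (T : SimpleGraph ι) (β : ι → Finset V)
    (x : ι) : SimpleGraph {v : V // v ∈ β x} where
  Adj u v := u ≠ v ∧ (G.Adj ↑u ↑v ∨ ∃ y, T.Adj x y ∧ ↑u ∈ β y ∧ ↑v ∈ β y)
  symm := by
    constructor
    rintro u v ⟨hne, h | ⟨y, hy, h1, h2⟩⟩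
    · exact ⟨hne.symm, Or.inl h.symm⟩
    · exact ⟨hne.symm, Or.inr ⟨y, hy, h2, h1⟩⟩
  loopless := by constructor; rintro u ⟨hne, _⟩; exact hne rfl

/-- The vertex set of the component of `T - x` containing `y` (denoted `T_{y∖x}`). -/
def compAway {ι : Type*} (T : SimpleGraph ι) (y x : ι) : Set ι :=
  {z | ∃ w : T.Walk y z, x ∉ w.support}

/-- A tree decomposition `(T, β)` of `G` is tight. -/
def Tight {V ι : Type*} (G : SimpleGraph V) (T : SimpleGraph ι) (β : ι → Finset V) : Prop :=
  ∀ x y, T.Adj x y →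
    ∃ v₀ ∈ (⋃ z ∈ compAway T y x, (β z : Set V)) \ (⋃ z ∈ compAway T x y, (β z : Set V)),
      ∀ u : V, u ∈ β x → u ∈ β y →
        ∃ c : V, G.Adj u c ∧ ∃ w : G.Walk v₀ c, ∀ p ∈ w.support,
          p ∈ (⋃ z ∈ compAway T y x, (β z : Set V)) \ (⋃ z ∈ compAway T x y, (β z : Set V))

/-- `G` has a subgraph isomorphic to some subdivision of the complete graph `K_μ`:
equivalently, there are `μ` branch vertices joined by pairwise internally disjoint
paths of nonzero length. -/
def HasKSubdivision {V : Type*} (μ : ℕ) (G : SimpleGraph V) : Prop :=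
  ∃ b : Fin μ → V, Function.Injective b ∧
    ∃ P : ∀ i j : Fin μ, i < j → G.Walk (b i) (b j),
      (∀ i j (h : i < j), (P i j h).IsPath) ∧
      (∀ i j (h : i < j), ∀ m : Fin μ, b m ∈ (P i j h).support → m = i ∨ m = j) ∧
      (∀ i j (h : i < j), ∀ k l (h' : k < l), (i, j) ≠ (k, l) →
        ∀ v : V, v ∈ (P i j h).support → v ∈ (P k l h').support →
          (v = b i ∨ v = b j) ∧ (v = b k ∨ v = b l))


section S15Aux

variable {V : Type} {G : SimpleGraph V} {X : Set V}

/-- Reachability class of `v` via walks of `G` staying inside `X`. -/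
def s15comp (G : SimpleGraph V) (X : Set V) (v : V) : Set V :=
  {u | ∃ w : G.Walk v u, ∀ z ∈ w.support, z ∈ X}

lemma s15comp_self {v : V} (hv : v ∈ X) : v ∈ s15comp G X v :=
  ⟨SimpleGraph.Walk.nil, by simpa using hv⟩

lemma s15_mem_X {v u : V} (h : u ∈ s15comp G X v) : u ∈ X := by
  obtain ⟨w, hw⟩ := h; exact hw u w.end_mem_support

lemma s15_symm {v u : V} (h : u ∈ s15comp G X v) : v ∈ s15comp G X u := by
  obtain ⟨w, hw⟩ := h
  exact ⟨w.reverse, by simpa using hw⟩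

lemma s15_trans {v u t : V} (h : u ∈ s15comp G X v) (h2 : t ∈ s15comp G X u) :
    t ∈ s15comp G X v := by
  obtain ⟨w, hw⟩ := h; obtain ⟨w2, hw2⟩ := h2
  refine ⟨w.append w2, fun z hz => ?_⟩
  rw [SimpleGraph.Walk.mem_support_append_iff] at hz
  rcases hz with hz | hz
  · exact hw z hz
  · exact hw2 z hz

lemma s15_eq {v u : V} (h : u ∈ s15comp G X v) : s15comp G X u = s15comp G X v :=
  Set.ext fun t => ⟨fun ht => s15_trans h ht, fun ht => s15_trans (s15_symm h) ht⟩

lemma s15_prefix {v u : V} (w : G.Walk v u) (hw : ∀ z ∈ w.support, z ∈ X) :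
    ∀ z ∈ w.support, z ∈ s15comp G X v := by
  classical
  exact fun z hz =>
    ⟨w.takeUntil z hz, fun p hp => hw p (SimpleGraph.Walk.support_takeUntil_subset w hz hp)⟩

lemma s15_reach {x u v : V} (hu : u ∈ s15comp G X x) (hv : v ∈ s15comp G X x) :
    ∃ p : G.Walk u v, ∀ z ∈ p.support, z ∈ s15comp G X x := by
  obtain ⟨wu, hwu⟩ := id hu; obtain ⟨wv, hwv⟩ := id hv
  have hX : ∀ z ∈ (wu.reverse.append wv).support, z ∈ X := by
    intro z hz
    rw [SimpleGraph.Walk.mem_support_append_iff] at hz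
    rcases hz with hz | hz
    · exact hwu z (by simpa using hz)
    · exact hwv z hz
  refine ⟨wu.reverse.append wv, fun z hz => ?_⟩
  have := s15_prefix _ hX z hz
  rwa [s15_eq hu] at this

lemma distIn_exists_walk {S : Set V} {a b : V}
    (h : ∃ w : G.Walk a b, ∀ v ∈ w.support, v ∈ S) :
    ∃ w : G.Walk a b, w.length = distIn G S a b ∧ ∀ v ∈ w.support, v ∈ S := by
  have hne : {n | ∃ w : G.Walk a b, w.length = n ∧ ∀ v ∈ w.support, v ∈ S}.Nonempty := by
    obtain ⟨w, hw⟩ := h; exact ⟨w.length, w, rfl, hw⟩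
  have hmem := Nat.sInf_mem hne
  obtain ⟨w, hw1, hw2⟩ := hmem
  exact ⟨w, hw1, hw2⟩

lemma distIn_le {S : Set V} {a b : V} (w : G.Walk a b) (hw : ∀ v ∈ w.support, v ∈ S) :
    distIn G S a b ≤ w.length := Nat.sInf_le ⟨w, rfl, hw⟩

open Classical in
/-- A canonical representative of the reachability class of `v`. -/
noncomputable def s15root (G : SimpleGraph V) (X : Set V) (v : V) : V :=
  if h : (s15comp G X v).Nonempty then h.some else v

lemma s15root_mem {v : V} (hv : v ∈ X) : s15root G X v ∈ s15comp G X v := by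
  have hn : (s15comp G X v).Nonempty := ⟨v, s15comp_self hv⟩
  rw [s15root, dif_pos hn]
  exact hn.some_mem

lemma s15root_eq {u v : V} (h : u ∈ s15comp G X v) : s15root G X u = s15root G X v := by
  have hc : s15comp G X u = s15comp G X v := s15_eq h
  have hn : (s15comp G X v).Nonempty := ⟨u, h⟩
  have hn' : (s15comp G X u).Nonempty := by rw [hc]; exact hn
  rw [s15root, s15root, dif_pos hn', dif_pos hn]
  congr 1

/-- The BFS layer of `v` in its reachability class. -/
noncomputable def s15lay (G : SimpleGraph V) (X : Set V) (v : V) : ℕ :=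
  distIn G (s15comp G X v) (s15root G X v) v

lemma s15_walk_from_root {x v : V} (hx : x ∈ X) (hv : v ∈ s15comp G X x) :
    ∃ w : G.Walk (s15root G X x) v, ∀ z ∈ w.support, z ∈ s15comp G X x :=
  s15_reach (s15root_mem hx) hv

lemma s15_adj_dist_le {x u v : V} (hx : x ∈ X) (hu : u ∈ s15comp G X x)
    (hv : v ∈ s15comp G X x) (h : G.Adj u v) :
    distIn G (s15comp G X x) (s15root G X x) v ≤
      distIn G (s15comp G X x) (s15root G X x) u + 1 := by
  obtain ⟨w, hw1, hw2⟩ := distIn_exists_walk (s15_walk_from_root hx hu)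
  have hle := distIn_le (w.concat h) (by
    intro z hz
    rw [SimpleGraph.Walk.support_concat, List.mem_append] at hz
    rcases hz with hz | hz
    · exact hw2 z hz
    · simp at hz; subst hz; exact hv)
  rw [SimpleGraph.Walk.length_concat, hw1] at hle
  exact hle

lemma s15_lay_zero {x : V} (hx : x ∈ X) (h0 : s15lay G X x = 0) : x = s15root G X x := by
  obtain ⟨w, hw1, _⟩ := distIn_exists_walk (s15_walk_from_root hx (s15comp_self hx))
  rw [s15lay] at h0
  rw [h0] at hw1
  exact (SimpleGraph.Walk.eq_of_length_eq_zero hw1).symm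

/-- The BFS layer set of `v`: vertices of its class at the same distance from the root. -/
noncomputable def s15L (G : SimpleGraph V) (X : Set V) (v : V) : Set V :=
  {u | u ∈ s15comp G X v ∧ distIn G (s15comp G X v) (s15root G X v) u = s15lay G X v}

lemma s15L_eq {x v : V} (hv : v ∈ s15comp G X x) (hl : s15lay G X v = s15lay G X x) :
    s15L G X v = s15L G X x := by
  unfold s15L
  rw [s15_eq hv, s15root_eq hv, hl]

lemma s15_mem_L {x v : V} (hv : v ∈ s15comp G X x) (hl : s15lay G X v = s15lay G X x) :
    v ∈ s15L G X x :=
  ⟨hv, by rw [← hl, s15lay, s15_eq hv, s15root_eq hv]⟩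

end S15Aux


/-- If there is no `(σ, θ)`-`X`-abyss in `G`, then `G[X]` admits a
`2^σ`-vertex-coloring of `G`-diameter less than `θ` (two vertices of `X` of the same
color joined by a walk inside their color class of `X` are at `G`-distance less
than `θ`). -/
theorem statement15 {V : Type} [Fintype V] (σ : ℕ) (θ : ℕ) (hθ : 1 ≤ θ)
    (G : SimpleGraph V) (X : Set V)
    (habyss : ¬ ∃ a : ℕ → V, IsAbyss G X σ θ a) :
    ∃ f : V → Fin (2 ^ σ), ∀ x y : V, x ∈ X → y ∈ X →
      (∃ w : G.Walk x y, ∀ v ∈ w.support, v ∈ X ∧ f v = f x) →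
      G.dist x y < θ := by
  classical
  induction σ generalizing X with
  | zero =>
    refine ⟨fun _ => 0, fun x y hx hy hwalk => ?_⟩
    obtain ⟨w, hw⟩ := hwalk
    by_contra hcon
    push_neg at hcon
    have hXw : ∀ z ∈ w.support, z ∈ ({v | v ∈ w.support} : Set V) := fun z hz => hz
    refine habyss ⟨fun k => match k with | 0 => x | _ + 1 => y,
      fun _ => {v | v ∈ w.support}, fun _ => 0, fun v hv => (hw v hv).1, ?_, ?_, ?_, hcon⟩
    · refine ⟨⟨x, w.start_mem_support⟩, fun a ha b hb => ?_⟩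
      obtain ⟨p, hp⟩ := s15_reach (s15_prefix w hXw a ha) (s15_prefix w hXw b hb)
      exact ⟨p, fun z hz => s15_mem_X (hp z hz)⟩
    · intro k hk
      cases k with
      | zero => exact w.start_mem_support
      | succ n => exact w.end_mem_support
    · intro i hi
      exact absurd hi (Nat.not_lt_zero i)
  | succ σ ih =>
    rcases isEmpty_or_nonempty V with hV | hV
    · exact ⟨fun v => isEmptyElim v, fun x => isEmptyElim x⟩
    have hpow : 0 < 2 ^ σ := pow_pos (by norm_num) σ
    have colEx : ∀ S : Set V, ∃ c : V → Fin (2 ^ σ),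
        (¬ ∃ a : ℕ → V, IsAbyss G S σ θ a) → ∀ x y : V, x ∈ S → y ∈ S →
          (∃ w : G.Walk x y, ∀ v ∈ w.support, v ∈ S ∧ c v = c x) → G.dist x y < θ := by
      intro S
      by_cases h : ¬ ∃ a : ℕ → V, IsAbyss G S σ θ a
      · obtain ⟨c, hc⟩ := ih S h
        exact ⟨c, fun _ => hc⟩
      · exact ⟨fun _ => ⟨0, hpow⟩, fun h' => absurd h' h⟩
    choose col hcol using colEx
    refine ⟨fun v => finCongr (pow_succ 2 σ).symm
      (finProdFinEquiv (col (s15comp G (s15L G X v) v) v,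
        ⟨s15lay G X v % 2, Nat.mod_lt _ (by norm_num)⟩)), ?_⟩
    intro x y hx hy hwalk
    obtain ⟨w, hw⟩ := hwalk
    have hge : ∀ v ∈ w.support,
        col (s15comp G (s15L G X v) v) v = col (s15comp G (s15L G X x) x) x ∧
        s15lay G X v % 2 = s15lay G X x % 2 := by
      intro v hv
      have h := (hw v hv).2
      have h2 := finProdFinEquiv.injective ((finCongr (pow_succ 2 σ).symm).injective h)
      exact ⟨congrArg Prod.fst h2, by simpa using congrArg Fin.val (congrArg Prod.snd h2)⟩
    have hXw : ∀ v ∈ w.support, v ∈ X := fun v hv => (hw v hv).1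
    have hcompw : ∀ v ∈ w.support, v ∈ s15comp G X x := s15_prefix w hXw
    have key : ∀ (u u' : V) (p : G.Walk u u'), (∀ z ∈ p.support, z ∈ X) →
        (∀ z ∈ p.support, s15lay G X z % 2 = s15lay G X u % 2) →
        ∀ z ∈ p.support, s15lay G X z = s15lay G X u := by
      intro u u' p
      induction p with
      | nil =>
        intro _ _ z hz
        rw [SimpleGraph.Walk.support_nil, List.mem_singleton] at hz
        subst hz; rfl
      | @cons a b c hadj q ihq =>
        intro hXp hpar z hz
        have haX : a ∈ X := hXp a (by simp)
        have hbX : b ∈ X := hXp b (by simp)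
        have hbcomp : b ∈ s15comp G X a := by
          refine ⟨SimpleGraph.Walk.cons hadj SimpleGraph.Walk.nil, ?_⟩
          intro t ht
          simp only [SimpleGraph.Walk.support_cons, SimpleGraph.Walk.support_nil,
            List.mem_cons, List.mem_singleton] at ht
          rcases ht with rfl | rfl | h
          · exact haX
          · exact hbX
          · exact absurd h (by simp)
        have hceq : s15comp G X b = s15comp G X a := s15_eq hbcomp
        have hreq : s15root G X b = s15root G X a := s15root_eq hbcomp
        have hlb : s15lay G X b = distIn G (s15comp G X a) (s15root G X a) b := by
          rw [s15lay, hceq, hreq]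
        have hla : s15lay G X a = distIn G (s15comp G X a) (s15root G X a) a := rfl
        have d1 := s15_adj_dist_le haX (s15comp_self haX) hbcomp hadj
        have d2 := s15_adj_dist_le haX hbcomp (s15comp_self haX) hadj.symm
        have hp := hpar b (by simp)
        have hlayb : s15lay G X b = s15lay G X a := by omega
        rw [SimpleGraph.Walk.support_cons, List.mem_cons] at hz
        rcases hz with rfl | hz
        · rfl
        · have hz2 := ihq (fun t ht => hXp t (by simp [SimpleGraph.Walk.support_cons, ht]))
            (fun t ht => by
              rw [hpar t (by simp [SimpleGraph.Walk.support_cons, ht]), ← hlayb]) z hz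
          rw [hz2, hlayb]
    have hlayw : ∀ z ∈ w.support, s15lay G X z = s15lay G X x :=
      key x y w hXw (fun z hz => (hge z hz).2)
    by_cases h0 : s15lay G X x = 0
    · have hxr : x = s15root G X x := s15_lay_zero hx h0
      have hyc : y ∈ s15comp G X x := hcompw y w.end_mem_support
      have hyr : y = s15root G X y :=
        s15_lay_zero hy (by rw [hlayw y w.end_mem_support]; exact h0)
      have hxy : y = x := by rw [hyr, s15root_eq hyc, ← hxr]
      rw [hxy, SimpleGraph.dist_self]
      omega
    · have h1 : 1 ≤ s15lay G X x := Nat.one_le_iff_ne_zero.mpr h0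
      have hLw : ∀ v ∈ w.support, v ∈ s15L G X x := fun v hv =>
        s15_mem_L (hcompw v hv) (hlayw v hv)
      have hnoab : ¬ ∃ a : ℕ → V, IsAbyss G (s15comp G (s15L G X x) x) σ θ a := by
        rintro ⟨a, S, ρ, hS0, hS0c, hmem0, hstep, hdist⟩
        refine habyss ⟨fun k => match k with | 0 => s15root G X x | n + 1 => a n,
          fun k => match k with | 0 => s15comp G X x | n + 1 => S n,
          fun k => match k with | 0 => s15lay G X x - 1 | n + 1 => ρ n,
          fun v hv => s15_mem_X hv, ?_, ?_, ?_, hdist⟩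
        · exact ⟨⟨x, s15comp_self hx⟩, fun p hp q hq => s15_reach hp hq⟩
        · intro k hk
          cases k with
          | zero => exact s15root_mem hx
          | succ n =>
            have := hS0 (hmem0 n (by omega))
            exact (s15_mem_X this).1
        · intro i hi
          cases i with
          | zero =>
            refine ⟨?_, hS0c, ?_⟩
            · intro v hv
              have hvL : v ∈ s15L G X x := s15_mem_X (hS0 hv)
              have hd := hvL.2
              refine ⟨hvL.1, ?_⟩
              show distIn G (s15comp G X x) (s15root G X x) v = s15lay G X x - 1 + 1
              omega
            · intro k hk1 hk2
              cases k with
              | zero => omega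
              | succ n => exact hmem0 n (by omega)
          | succ j =>
            obtain ⟨hsub, hconn, hm⟩ := hstep j (by omega)
            refine ⟨hsub, hconn, ?_⟩
            intro k hk1 hk2
            cases k with
            | zero => omega
            | succ n => exact hm n (by omega) (by omega)
      have hx2 : x ∈ s15comp G (s15L G X x) x := s15comp_self (hLw x w.start_mem_support)
      have hy2 : y ∈ s15comp G (s15L G X x) x := ⟨w, hLw⟩
      refine hcol _ hnoab x y hx2 hy2 ⟨w, fun v hv => ⟨s15_prefix w hLw v hv, ?_⟩⟩
      have hvc2 : v ∈ s15comp G (s15L G X x) x := s15_prefix w hLw v hv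
      have hc2 : s15comp G (s15L G X v) v = s15comp G (s15L G X x) x := by
        rw [s15L_eq (hcompw v hv) (hlayw v hv)]
        exact s15_eq hvc2
      have hg := (hge v hv).1
      rwa [hc2] at hg
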